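/- Let $A$ be a real $n \times n$ normal matrix. Then $\mathrm{tr}\, S(A)^2 = \|S(A)\|^2 = \tfrac12 \|A\|^2 + \tfrac12 \mathrm{tr}(A^2)$, and for any $h \in GL_n(\mathbb{R})$ and any $B$ with $A$ in the closure of the conjugation orbit of $B$, $\mathrm{tr}\, S(hBh^{-1})^2 \ge \mathrm{tr}\, S(A)^2$. -/

import Mathlib

open Matrix

/-- Frobenius norm of a real square matrix. -/
noncomputable def frobNorm {n : ℕ} (A : Matrix (Fin n) (Fin n) ℝ) : ℝ :=
  Real.sqrt (∑ i, ∑ j, A i j ^ 2)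

/-- Symmetric part of a matrix. -/
noncomputable def symPart {n : ℕ} (X : Matrix (Fin n) (Fin n) ℝ) :
    Matrix (Fin n) (Fin n) ℝ :=
  (1 / 2 : ℝ) • (X + Xᵀ)


lemma frobNorm_sq {n : ℕ} (A : Matrix (Fin n) (Fin n) ℝ) :
    frobNorm A ^ 2 = ∑ i, ∑ j, A i j ^ 2 := by
  rw [frobNorm, Real.sq_sqrt]
  positivity

lemma trace_mul_transpose {n : ℕ} (A : Matrix (Fin n) (Fin n) ℝ) :
    (A * Aᵀ).trace = ∑ i, ∑ j, A i j ^ 2 := by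
  simp [Matrix.trace, Matrix.mul_apply, Matrix.diag, sq]

lemma part2 {n : ℕ} (A : Matrix (Fin n) (Fin n) ℝ) :
    (symPart A * symPart A).trace = 1 / 2 * frobNorm A ^ 2 + 1 / 2 * (A * A).trace := by
  have h1 : (Aᵀ * Aᵀ).trace = (A * A).trace := by
    rw [← Matrix.trace_transpose, Matrix.transpose_mul, Matrix.transpose_transpose]
  have h2 : (Aᵀ * A).trace = (A * Aᵀ).trace := Matrix.trace_mul_comm _ _
  rw [frobNorm_sq, ← trace_mul_transpose]
  simp only [symPart, Matrix.smul_mul, Matrix.mul_smul, Matrix.add_mul, Matrix.mul_add,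
    Matrix.trace_smul, Matrix.trace_add, smul_eq_mul]
  rw [h1, h2]
  ring

lemma part1 {n : ℕ} (A : Matrix (Fin n) (Fin n) ℝ) :
    (symPart A * symPart A).trace = frobNorm (symPart A) ^ 2 := by
  have hs : (symPart A)ᵀ = symPart A := by
    simp [symPart, Matrix.transpose_smul, Matrix.transpose_add, add_comm]
  rw [frobNorm_sq, ← trace_mul_transpose, hs]

namespace SchurAux
open Polynomial

variable {n : ℕ}

/-- Embed an n×n matrix as the lower-right block of (1 ⊕ W). -/
def emb (W : Matrix (Fin n) (Fin n) ℂ) : Matrix (Fin (n+1)) (Fin (n+1)) ℂ :=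
  Matrix.of fun i j =>
    Fin.cases (Fin.cases 1 (fun _ => 0) j) (fun i' => Fin.cases 0 (fun j' => W i' j') j) i

@[simp] lemma emb_zero_zero (W : Matrix (Fin n) (Fin n) ℂ) : emb W 0 0 = 1 := rfl
@[simp] lemma emb_zero_succ (W : Matrix (Fin n) (Fin n) ℂ) (j : Fin n) :
    emb W 0 j.succ = 0 := rfl
@[simp] lemma emb_succ_zero (W : Matrix (Fin n) (Fin n) ℂ) (i : Fin n) :
    emb W i.succ 0 = 0 := rfl
@[simp] lemma emb_succ_succ (W : Matrix (Fin n) (Fin n) ℂ) (i j : Fin n) :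
    emb W i.succ j.succ = W i j := rfl

lemma emb_conjTranspose (W : Matrix (Fin n) (Fin n) ℂ) : (emb W)ᴴ = emb Wᴴ := by
  ext i j
  refine Fin.cases ?_ (fun i' => ?_) i <;> refine Fin.cases ?_ (fun j' => ?_) j <;>
    simp [Matrix.conjTranspose_apply]

lemma emb_mul (W₁ W₂ : Matrix (Fin n) (Fin n) ℂ) : emb W₁ * emb W₂ = emb (W₁ * W₂) := by
  ext i j
  rw [Matrix.mul_apply]
  refine Fin.cases ?_ (fun i' => ?_) i <;> refine Fin.cases ?_ (fun j' => ?_) j <;>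
    rw [Fin.sum_univ_succ] <;> simp [Matrix.mul_apply]

lemma emb_one : emb (1 : Matrix (Fin n) (Fin n) ℂ) = 1 := by
  ext i j
  refine Fin.cases ?_ (fun i' => ?_) i <;> refine Fin.cases ?_ (fun j' => ?_) j <;>
    simp [Matrix.one_apply, Fin.succ_ne_zero, (Fin.succ_ne_zero _).symm, Fin.succ_inj]

lemma conj_emb_succ_succ (W : Matrix (Fin n) (Fin n) ℂ) (N : Matrix (Fin (n+1)) (Fin (n+1)) ℂ)
    (i j : Fin n) :
    ((emb W)ᴴ * N * emb W) i.succ j.succ =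
      (Wᴴ * N.submatrix Fin.succ Fin.succ * W) i j := by
  rw [Matrix.mul_apply, Fin.sum_univ_succ]
  simp only [Matrix.mul_apply, Fin.sum_univ_succ, emb_conjTranspose]
  simp [Matrix.mul_apply, Matrix.conjTranspose_apply, Finset.mul_sum, Finset.sum_mul, mul_assoc]
lemma conj_emb_succ_zero (W : Matrix (Fin n) (Fin n) ℂ) (N : Matrix (Fin (n+1)) (Fin (n+1)) ℂ)
    (hN : ∀ k : Fin n, N k.succ 0 = 0) (i : Fin n) :
    ((emb W)ᴴ * N * emb W) i.succ 0 = 0 := by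
  rw [Matrix.mul_apply, Fin.sum_univ_succ]
  simp only [Matrix.mul_apply, Fin.sum_univ_succ, emb_conjTranspose]
  simp [hN]


variable {n : ℕ}

lemma step (M : Matrix (Fin (n+1)) (Fin (n+1)) ℂ) :
    ∃ U : Matrix (Fin (n+1)) (Fin (n+1)) ℂ, Uᴴ * U = 1 ∧
      ∀ i : Fin n, (Uᴴ * M * U) i.succ 0 = 0 := by
  classical
  set E := EuclideanSpace ℂ (Fin (n+1))
  have hfr : Module.finrank ℂ E = n + 1 := by
    show Module.finrank ℂ (EuclideanSpace ℂ (Fin (n+1))) = n + 1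
    rw [finrank_euclideanSpace, Fintype.card_fin]
  have : Nontrivial E := Module.nontrivial_of_finrank_pos (by omega : 0 < Module.finrank ℂ E)
  obtain ⟨μ, hμ⟩ := Module.End.exists_eigenvalue (Matrix.toEuclideanLin M)
  obtain ⟨v, hv⟩ := hμ.exists_hasEigenvector
  set u : E := ((‖v‖ : ℂ))⁻¹ • v with hu
  have hvne : v ≠ 0 := hv.right
  have hvnorm : (‖v‖ : ℝ) ≠ 0 := norm_ne_zero_iff.2 hvne
  have hunorm : ‖u‖ = 1 := by
    rw [hu, norm_smul]
    simp [hvnorm, inv_mul_cancel₀]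
  have huev : Matrix.toEuclideanLin M u = μ • u := by
    rw [hu, _root_.map_smul, hv.apply_eq_smul, smul_comm]
  have horth : Orthonormal ℂ (Set.restrict ({0} : Set (Fin (n+1))) (fun _ => u)) := by
    constructor
    · intro i; exact hunorm
    · rintro ⟨i, hi⟩ ⟨j, hj⟩ hij
      exact absurd (Subtype.ext ((Set.eq_of_mem_singleton hi).trans
        (Set.eq_of_mem_singleton hj).symm)) hij
  obtain ⟨b, hb⟩ := horth.exists_orthonormalBasis_extension_of_card_eq
    (by simpa using hfr) (v := fun _ => u)
  have hb0 : b 0 = u := hb 0 rfl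
  set U : Matrix (Fin (n+1)) (Fin (n+1)) ℂ := Matrix.of fun i j => b j i with hU
  have hUU : Uᴴ * U = 1 := by
    ext i j
    rw [Matrix.mul_apply, Matrix.one_apply]
    have := orthonormal_iff_ite.mp b.orthonormal i j
    rw [PiLp.inner_apply] at this
    simpa [hU, Matrix.conjTranspose_apply, RCLike.inner_apply, mul_comm] using this
  refine ⟨U, hUU, fun i => ?_⟩
  have hMu : ∀ k, (M *ᵥ fun l => U l 0) k = μ * U k 0 := by
    intro k
    have h1 := huev
    rw [Matrix.toEuclideanLin_apply] at h1
    have h2 : M *ᵥ (WithLp.equiv 2 (Fin (n+1) → ℂ)) u = (WithLp.equiv 2 _) (μ • u) := by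
      rw [← h1]; rfl
    have h3 := congrFun h2 k
    have hcol : (fun l => U l 0) = (WithLp.equiv 2 (Fin (n+1) → ℂ)) u := by
      funext l; rw [hU]; show b 0 l = _; rw [hb0]; rfl
    rw [hcol, h3]
    show ((WithLp.equiv 2 (Fin (n+1) → ℂ)) (μ • u)) k = μ * U k 0
    have : U k 0 = ((WithLp.equiv 2 (Fin (n+1) → ℂ)) u) k := by
      rw [hU]; show b 0 k = _; rw [hb0]; rfl
    rw [this]; rfl
  have hexp : (Uᴴ * M * U) i.succ 0 = ∑ k, star (U k i.succ) * (M *ᵥ fun l => U l 0) k := by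
    rw [Matrix.mul_assoc, Matrix.mul_apply]
    simp [Matrix.conjTranspose_apply, Matrix.mul_apply, Matrix.mulVec, dotProduct]
  rw [hexp]
  have hz : ∑ k, star (U k i.succ) * U k 0 = 0 := by
    have horthij := orthonormal_iff_ite.mp b.orthonormal i.succ 0
    rw [PiLp.inner_apply] at horthij
    simpa [RCLike.inner_apply, Fin.succ_ne_zero, hU, mul_comm] using horthij
  calc ∑ k, star (U k i.succ) * (M *ᵥ fun l => U l 0) k
      = ∑ k, μ * (star (U k i.succ) * U k 0) := by
        apply Finset.sum_congr rfl; intro k _; rw [hMu k]; ring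
    _ = μ * ∑ k, star (U k i.succ) * U k 0 := by rw [Finset.mul_sum]
    _ = 0 := by rw [hz, mul_zero]



lemma charpoly_conj {R : Type*} [CommRing R] {n : ℕ} (M P Q : Matrix (Fin n) (Fin n) R)
    (h2 : Q * P = 1) : (Q * M * P).charpoly = M.charpoly := by
  have hc : charmatrix (Q * M * P) =
      (C : R →+* R[X]).mapMatrix Q * charmatrix M * (C : R →+* R[X]).mapMatrix P := by
    unfold charmatrix
    rw [Matrix.mul_sub, Matrix.sub_mul]
    congr 1
    · rw [Matrix.mul_assoc, (Matrix.scalar_commute (X : R[X])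
        (fun r' => Commute.all _ _) _).eq, ← Matrix.mul_assoc, ← _root_.map_mul, h2, _root_.map_one,
        Matrix.one_mul]
    · rw [← _root_.map_mul, ← _root_.map_mul]
  rw [Matrix.charpoly, Matrix.charpoly, hc, Matrix.det_mul, Matrix.det_mul]
  have hdet : det ((C : R →+* R[X]).mapMatrix Q) * det ((C : R →+* R[X]).mapMatrix P) = 1 := by
    rw [← Matrix.det_mul, ← _root_.map_mul, h2, _root_.map_one, Matrix.det_one]
  calc det ((C : R →+* R[X]).mapMatrix Q) * det (charmatrix M) *
        det ((C : R →+* R[X]).mapMatrix P)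
      = det (charmatrix M) * (det ((C : R →+* R[X]).mapMatrix Q) *
        det ((C : R →+* R[X]).mapMatrix P)) := by ring
    _ = det (charmatrix M) := by rw [hdet, mul_one]


variable {n : ℕ}

lemma schur_triangular : ∀ (n : ℕ) (M : Matrix (Fin n) (Fin n) ℂ),
    ∃ U : Matrix (Fin n) (Fin n) ℂ, Uᴴ * U = 1 ∧
      ∀ i j : Fin n, j < i → (Uᴴ * M * U) i j = 0 := by
  intro n
  induction n with
  | zero => exact fun M => ⟨1, by simp, fun i => i.elim0⟩
  | succ n ih =>
    intro M
    obtain ⟨U₁, hU₁, hcol⟩ := step M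
    set N := U₁ᴴ * M * U₁ with hN
    obtain ⟨U', hU', htri⟩ := ih (N.submatrix Fin.succ Fin.succ)
    refine ⟨U₁ * emb U', ?_, ?_⟩
    · rw [conjTranspose_mul, emb_conjTranspose, Matrix.mul_assoc,
        ← Matrix.mul_assoc U₁ᴴ U₁ (emb U'), hU₁, Matrix.one_mul, emb_mul, hU', emb_one]
    · have hrw : (U₁ * emb U')ᴴ * M * (U₁ * emb U') = (emb U')ᴴ * N * emb U' := by
        rw [conjTranspose_mul, hN]
        simp only [Matrix.mul_assoc]
      intro i j hji
      rw [hrw]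
      refine Fin.cases ?_ (fun i' => ?_) i hji
      · exact fun h => absurd h (Fin.not_lt_zero j)
      · refine Fin.cases ?_ (fun j' => ?_) j
        · exact fun _ => conj_emb_succ_zero U' N hcol i'
        · intro h
          rw [conj_emb_succ_succ]
          exact htri _ _ (by exact_mod_cast Fin.succ_lt_succ_iff.mp h)

lemma trace_mul_conjTranspose_self (X : Matrix (Fin n) (Fin n) ℂ) :
    (X * Xᴴ).trace = ((∑ i, ∑ j, Complex.normSq (X i j) : ℝ) : ℂ) := by
  rw [Matrix.trace]
  push_cast
  apply Finset.sum_congr rfl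
  intro i _
  rw [Matrix.diag_apply, Matrix.mul_apply]
  apply Finset.sum_congr rfl
  intro j _
  rw [Matrix.conjTranspose_apply,
    show star (X i j) = (starRingEnd ℂ) (X i j) from rfl, Complex.mul_conj]

lemma sum_normSq_conj (M U : Matrix (Fin n) (Fin n) ℂ) (hU : Uᴴ * U = 1) :
    ∑ i, ∑ j, Complex.normSq ((Uᴴ * M * U) i j) = ∑ i, ∑ j, Complex.normSq (M i j) := by
  have hU' : U * Uᴴ = 1 := mul_eq_one_comm.mp hU
  have h1 : ((Uᴴ * M * U) * (Uᴴ * M * U)ᴴ).trace = (M * Mᴴ).trace := by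
    have : (Uᴴ * M * U) * (Uᴴ * M * U)ᴴ = Uᴴ * (M * Mᴴ) * U := by
      rw [conjTranspose_mul, conjTranspose_mul, conjTranspose_conjTranspose]
      calc Uᴴ * M * U * (Uᴴ * (Mᴴ * U))
          = Uᴴ * M * (U * Uᴴ) * (Mᴴ * U) := by simp only [Matrix.mul_assoc]
        _ = Uᴴ * (M * Mᴴ) * U := by rw [hU']; simp only [Matrix.mul_one, Matrix.mul_assoc]
    rw [this, Matrix.trace_mul_comm, ← Matrix.mul_assoc, hU', Matrix.one_mul]
  have := h1
  rw [trace_mul_conjTranspose_self, trace_mul_conjTranspose_self] at this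
  exact_mod_cast this

lemma triangular_normal_upper (T : Matrix (Fin n) (Fin n) ℂ)
    (htri : ∀ i j : Fin n, j < i → T i j = 0) (hnorm : Tᴴ * T = T * Tᴴ) :
    ∀ i j : Fin n, i < j → T i j = 0 := by
  have hdiag : ∀ i, ∑ k, Complex.normSq (T k i) = ∑ k, Complex.normSq (T i k) := by
    intro i
    have h := congrFun (congrFun hnorm i) i
    rw [Matrix.mul_apply, Matrix.mul_apply] at h
    have hl : (∑ k, Tᴴ i k * T k i) = ((∑ k, Complex.normSq (T k i) : ℝ) : ℂ) := by
      push_cast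
      refine Finset.sum_congr rfl fun k _ => ?_
      rw [Matrix.conjTranspose_apply, mul_comm,
        show star (T k i) = (starRingEnd ℂ) (T k i) from rfl, Complex.mul_conj]
    have hr : (∑ k, T i k * Tᴴ k i) = ((∑ k, Complex.normSq (T i k) : ℝ) : ℂ) := by
      push_cast
      refine Finset.sum_congr rfl fun k _ => ?_
      rw [Matrix.conjTranspose_apply,
        show star (T i k) = (starRingEnd ℂ) (T i k) from rfl, Complex.mul_conj]
    rw [hl, hr] at h
    exact_mod_cast h
  suffices H : ∀ m : ℕ, ∀ i : Fin n, i.val < m → ∀ j, i < j → T i j = 0 by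
    exact fun i j h => H (i.val + 1) i (Nat.lt_succ_self _) j h
  intro m
  induction m with
  | zero => intro i hi; omega
  | succ m ihm =>
    intro i him j hij
    by_cases hi : i.val < m
    · exact ihm i hi j hij
    have him' : i.val = m := by omega
    have hcol : ∑ k, Complex.normSq (T k i) = Complex.normSq (T i i) := by
      apply Finset.sum_eq_single
      · intro b _ hb
        rcases lt_trichotomy b i with hlt | heq | hgt
        · have : b.val < m := by omega
          rw [ihm b this i hlt, Complex.normSq_zero]
        · exact absurd heq hb
        · rw [htri b i hgt, Complex.normSq_zero]
      · intro h; exact absurd (Finset.mem_univ i) h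
    have hrow := hdiag i
    rw [hcol] at hrow
    have hsplit : ∑ k ∈ Finset.univ.erase i, Complex.normSq (T i k) = 0 := by
      have hadd := Finset.sum_erase_add Finset.univ (fun k => Complex.normSq (T i k))
        (Finset.mem_univ i)
      linarith [hrow, hadd]
    have hk := (Finset.sum_eq_zero_iff_of_nonneg
      (fun x _ => Complex.normSq_nonneg (T i x))).mp hsplit j
      (Finset.mem_erase.mpr ⟨ne_of_gt hij, Finset.mem_univ j⟩)
    exact Complex.normSq_eq_zero.mp hk


lemma conj_prod (M₁ M₂ U : Matrix (Fin n) (Fin n) ℂ) (hU' : U * Uᴴ = 1) :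
    (Uᴴ * M₁ * U) * (Uᴴ * M₂ * U) = Uᴴ * (M₁ * M₂) * U := by
  calc (Uᴴ * M₁ * U) * (Uᴴ * M₂ * U)
      = Uᴴ * M₁ * (U * Uᴴ) * (M₂ * U) := by simp only [Matrix.mul_assoc]
    _ = Uᴴ * (M₁ * M₂) * U := by rw [hU']; simp only [Matrix.mul_one, Matrix.mul_assoc]

lemma spectral_key (M : Matrix (Fin n) (Fin n) ℂ) :
    (M.charpoly.roots.map Complex.normSq).sum ≤ ∑ i, ∑ j, Complex.normSq (M i j) ∧
    (Mᴴ * M = M * Mᴴ →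
      (M.charpoly.roots.map Complex.normSq).sum = ∑ i, ∑ j, Complex.normSq (M i j)) := by
  obtain ⟨U, hUU, htri⟩ := schur_triangular n M
  set T := Uᴴ * M * U with hT
  have hUU' : U * Uᴴ = 1 := mul_eq_one_comm.mp hUU
  have hcp : T.charpoly = M.charpoly := charpoly_conj M U Uᴴ hUU
  have hblock : T.BlockTriangular id := fun i j h => htri i j h
  have hcpT : T.charpoly = ∏ i, (X - C (T i i)) := charpoly_of_upperTriangular T hblock
  have hroots : M.charpoly.roots = Finset.univ.val.map (fun i => T i i) := by
    rw [← hcp, hcpT]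
    have hprod : ∏ i, (X - C (T i i)) =
        ((Finset.univ.val.map fun i => T i i).map fun a => X - C a).prod := by
      rw [Multiset.map_map]; rfl
    rw [hprod, roots_multiset_prod_X_sub_C]
  have hsum : (M.charpoly.roots.map Complex.normSq).sum = ∑ i, Complex.normSq (T i i) := by
    rw [hroots, Multiset.map_map]; rfl
  have hnorm : ∑ i, ∑ j, Complex.normSq (M i j) = ∑ i, ∑ j, Complex.normSq (T i j) :=
    (sum_normSq_conj M U hUU).symm
  have hTconj : Tᴴ = Uᴴ * Mᴴ * U := by
    rw [hT, conjTranspose_mul, conjTranspose_mul, conjTranspose_conjTranspose]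
    simp only [Matrix.mul_assoc]
  constructor
  · rw [hsum, hnorm]
    apply Finset.sum_le_sum
    intro i _
    exact Finset.single_le_sum (fun j _ => Complex.normSq_nonneg _) (Finset.mem_univ i)
  · intro hnml
    have hTn : Tᴴ * T = T * Tᴴ := by
      rw [hTconj, hT, conj_prod _ _ _ hUU', conj_prod _ _ _ hUU', hnml]
    have hupper := triangular_normal_upper T htri hTn
    rw [hsum, hnorm]
    apply Finset.sum_congr rfl
    intro i _
    symm
    apply Finset.sum_eq_single i
    · intro j _ hj
      rcases lt_trichotomy j i with hlt | heq | hgt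
      · rw [htri i j hlt, Complex.normSq_zero]
      · exact absurd heq hj
      · rw [hupper i j hgt, Complex.normSq_zero]
    · intro h; exact absurd (Finset.mem_univ i) h

lemma eval_charpoly_det {R : Type*} [CommRing R] {n : ℕ} (X : Matrix (Fin n) (Fin n) R) (t : R) :
    (X.charpoly).eval t = (Matrix.diagonal (fun _ => t) - X).det := by
  rw [Matrix.charpoly, ← Polynomial.coe_evalRingHom, RingHom.map_det]
  congr 1
  ext i j
  by_cases h : i = j
  · subst h
    simp [charmatrix_apply_eq, Matrix.sub_apply]
  · simp [charmatrix_apply_ne _ _ _ h, Matrix.sub_apply, Matrix.diagonal_apply_ne _ h]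

lemma continuous_eval_charpoly {n : ℕ} (t : ℝ) :
    Continuous fun X : Matrix (Fin n) (Fin n) ℝ => (X.charpoly).eval t := by
  have : Continuous fun X : Matrix (Fin n) (Fin n) ℝ =>
      (Matrix.diagonal (fun _ => t) - X).det :=
    Continuous.matrix_det (continuous_const.sub continuous_id)
  exact this.congr fun X => (eval_charpoly_det X t).symm

lemma conj_GL {n : ℕ} (B : Matrix (Fin n) (Fin n) ℝ) (g : GL (Fin n) ℝ) :
    ((g : Matrix (Fin n) (Fin n) ℝ) * B * (↑g⁻¹ : Matrix (Fin n) (Fin n) ℝ)).charpoly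
      = B.charpoly := by
  apply charpoly_conj
  exact Units.mul_inv g

lemma charpoly_eq_of_mem_closure {n : ℕ} (A B : Matrix (Fin n) (Fin n) ℝ)
    (hA : A ∈ closure {M : Matrix (Fin n) (Fin n) ℝ |
      ∃ g : GL (Fin n) ℝ, M = (g : Matrix (Fin n) (Fin n) ℝ) * B * (↑g⁻¹ : Matrix (Fin n) (Fin n) ℝ)}) :
    A.charpoly = B.charpoly := by
  apply Polynomial.funext
  intro t
  have hclosed : IsClosed {X : Matrix (Fin n) (Fin n) ℝ |
      (X.charpoly).eval t = (B.charpoly).eval t} :=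
    isClosed_eq (continuous_eval_charpoly t) continuous_const
  have hsub : {M : Matrix (Fin n) (Fin n) ℝ | ∃ g : GL (Fin n) ℝ,
      M = (g : Matrix (Fin n) (Fin n) ℝ) * B * (↑g⁻¹ : Matrix (Fin n) (Fin n) ℝ)} ⊆
      {X | (X.charpoly).eval t = (B.charpoly).eval t} := by
    rintro M ⟨g, rfl⟩
    simp only [Set.mem_setOf_eq]
    rw [conj_GL B g]
  exact closure_minimal hsub hclosed hA

lemma trace_sq_conj_GL {n : ℕ} (B : Matrix (Fin n) (Fin n) ℝ) (g : GL (Fin n) ℝ) :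
    (((g : Matrix (Fin n) (Fin n) ℝ) * B * (↑g⁻¹ : Matrix (Fin n) (Fin n) ℝ)) *
      ((g : Matrix (Fin n) (Fin n) ℝ) * B * (↑g⁻¹ : Matrix (Fin n) (Fin n) ℝ))).trace
      = (B * B).trace := by
  have h1 : ((g : Matrix (Fin n) (Fin n) ℝ) * B * (↑g⁻¹ : Matrix (Fin n) (Fin n) ℝ)) *
      ((g : Matrix (Fin n) (Fin n) ℝ) * B * (↑g⁻¹ : Matrix (Fin n) (Fin n) ℝ)) =
      (g : Matrix (Fin n) (Fin n) ℝ) * (B * B) * (↑g⁻¹ : Matrix (Fin n) (Fin n) ℝ) := by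
    calc ((g : Matrix (Fin n) (Fin n) ℝ) * B * (↑g⁻¹ : Matrix (Fin n) (Fin n) ℝ)) *
        ((g : Matrix (Fin n) (Fin n) ℝ) * B * (↑g⁻¹ : Matrix (Fin n) (Fin n) ℝ))
        = (g : Matrix (Fin n) (Fin n) ℝ) * B *
          ((↑g⁻¹ : Matrix (Fin n) (Fin n) ℝ) * (g : Matrix (Fin n) (Fin n) ℝ)) *
          (B * (↑g⁻¹ : Matrix (Fin n) (Fin n) ℝ)) := by simp only [Matrix.mul_assoc]
      _ = _ := by rw [Units.inv_mul g]; simp only [Matrix.mul_one, Matrix.mul_assoc]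
  rw [h1, Matrix.trace_mul_comm, ← Matrix.mul_assoc, Units.inv_mul g, Matrix.one_mul]

lemma trace_sq_eq_of_mem_closure {n : ℕ} (A B : Matrix (Fin n) (Fin n) ℝ)
    (hA : A ∈ closure {M : Matrix (Fin n) (Fin n) ℝ |
      ∃ g : GL (Fin n) ℝ, M = (g : Matrix (Fin n) (Fin n) ℝ) * B * (↑g⁻¹ : Matrix (Fin n) (Fin n) ℝ)}) :
    (A * A).trace = (B * B).trace := by
  have hclosed : IsClosed {X : Matrix (Fin n) (Fin n) ℝ | (X * X).trace = (B * B).trace} :=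
    isClosed_eq (Continuous.matrix_trace (Continuous.matrix_mul continuous_id continuous_id))
      continuous_const
  have hsub : {M : Matrix (Fin n) (Fin n) ℝ | ∃ g : GL (Fin n) ℝ,
      M = (g : Matrix (Fin n) (Fin n) ℝ) * B * (↑g⁻¹ : Matrix (Fin n) (Fin n) ℝ)} ⊆
      {X | (X * X).trace = (B * B).trace} := by
    rintro M ⟨g, rfl⟩
    exact trace_sq_conj_GL B g
  exact closure_minimal hsub hclosed hA

/-- The sum of |λ|² over complex eigenvalues of a real matrix. -/
noncomputable def lam2 {n : ℕ} (A : Matrix (Fin n) (Fin n) ℝ) : ℝ :=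
  (((A.map (Complex.ofReal)).charpoly).roots.map Complex.normSq).sum

lemma map_complex_charpoly {n : ℕ} (A : Matrix (Fin n) (Fin n) ℝ) :
    (A.map (Complex.ofReal)).charpoly = A.charpoly.map Complex.ofRealHom := by
  rw [← Matrix.charpoly_map]
  rfl

lemma lam2_eq_of_charpoly_eq {n : ℕ} (A B : Matrix (Fin n) (Fin n) ℝ)
    (h : A.charpoly = B.charpoly) : lam2 A = lam2 B := by
  unfold lam2
  rw [map_complex_charpoly, map_complex_charpoly, h]

lemma sum_normSq_map {n : ℕ} (A : Matrix (Fin n) (Fin n) ℝ) :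
    ∑ i, ∑ j, Complex.normSq ((A.map (Complex.ofReal)) i j) = ∑ i, ∑ j, A i j ^ 2 := by
  refine Finset.sum_congr rfl fun i _ => Finset.sum_congr rfl fun j _ => ?_
  rw [Matrix.map_apply, Complex.normSq_ofReal, sq]

lemma lam2_le (A : Matrix (Fin n) (Fin n) ℝ) : lam2 A ≤ ∑ i, ∑ j, A i j ^ 2 := by
  have := (spectral_key (A.map (Complex.ofReal))).1
  rwa [sum_normSq_map] at this

lemma lam2_eq_of_normal (A : Matrix (Fin n) (Fin n) ℝ) (hA : A * Aᵀ = Aᵀ * A) :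
    lam2 A = ∑ i, ∑ j, A i j ^ 2 := by
  have hmapT : (A.map (Complex.ofReal))ᴴ = Aᵀ.map (Complex.ofReal) := by
    ext i j
    simp [Matrix.conjTranspose_apply, Matrix.map_apply]
  have hmul : ∀ X Y : Matrix (Fin n) (Fin n) ℝ,
      (X * Y).map (Complex.ofReal) = X.map (Complex.ofReal) * Y.map (Complex.ofReal) := by
    intro X Y
    exact Matrix.map_mul (f := Complex.ofRealHom)
  have hnml : (A.map (Complex.ofReal))ᴴ * (A.map (Complex.ofReal)) =
      (A.map (Complex.ofReal)) * (A.map (Complex.ofReal))ᴴ := by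
    rw [hmapT, ← hmul, ← hmul, ← hA]
  have := (spectral_key (A.map (Complex.ofReal))).2 hnml
  rwa [sum_normSq_map] at this

end SchurAux

open SchurAux in
theorem stmt15 (n : ℕ) (A : Matrix (Fin n) (Fin n) ℝ) (hA : A * Aᵀ = Aᵀ * A) :
    (symPart A * symPart A).trace = frobNorm (symPart A) ^ 2 ∧
    (symPart A * symPart A).trace = 1 / 2 * frobNorm A ^ 2 + 1 / 2 * (A * A).trace ∧
    ∀ (B : Matrix (Fin n) (Fin n) ℝ),
      A ∈ closure {M : Matrix (Fin n) (Fin n) ℝ |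
        ∃ g : GL (Fin n) ℝ, M = (g : Matrix (Fin n) (Fin n) ℝ) * B * (↑g⁻¹ : Matrix (Fin n) (Fin n) ℝ)} →
      ∀ h : GL (Fin n) ℝ,
        (symPart A * symPart A).trace ≤
          (symPart ((h : Matrix (Fin n) (Fin n) ℝ) * B * (↑h⁻¹ : Matrix (Fin n) (Fin n) ℝ)) *
            symPart ((h : Matrix (Fin n) (Fin n) ℝ) * B * (↑h⁻¹ : Matrix (Fin n) (Fin n) ℝ))).trace := by
  refine ⟨part1 A, part2 A, ?_⟩
  intro B hclo h
  set M : Matrix (Fin n) (Fin n) ℝ :=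
    (h : Matrix (Fin n) (Fin n) ℝ) * B * (↑h⁻¹ : Matrix (Fin n) (Fin n) ℝ) with hM
  rw [part2 A, part2 M]
  have htr : (A * A).trace = (M * M).trace :=
    (trace_sq_eq_of_mem_closure A B hclo).trans (trace_sq_conj_GL B h).symm
  have hfr : frobNorm A ^ 2 ≤ frobNorm M ^ 2 := by
    rw [frobNorm_sq, frobNorm_sq]
    calc ∑ i, ∑ j, A i j ^ 2 = lam2 A := (lam2_eq_of_normal A hA).symm
      _ = lam2 M := lam2_eq_of_charpoly_eq A M
          ((charpoly_eq_of_mem_closure A B hclo).trans (conj_GL B h).symm)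
      _ ≤ ∑ i, ∑ j, M i j ^ 2 := lam2_le M
  linarith
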